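/- Let p : ℝ → Matₙ(ℝ) be continuous with p(u) symmetric for all u, and let L : ℝ → Matₙ(ℝ) be a twice differentiable solution of the Jacobi equation L''(u) + p(u)·L(u) = 0 such that for some u₀, L(u₀) is invertible and L'(u₀)·L(u₀)⁻¹ is symmetric. Then the degeneracy set 𝕊 = { u ∈ ℝ : det L(u) = 0 } has no accumulation point in ℝ; i.e., 𝕊 is a discrete (closed) subset of ℝ. -/

import Mathlib

open Matrix Set Filter

attribute [local instance] Matrix.frobeniusNormedAddCommGroup Matrix.frobeniusNormedSpace

attribute [local instance] Matrix.frobeniusNormedRing Matrix.frobeniusNormedAlgebra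

section gronwallHelpers

variable {F : Type*} [NormedAddCommGroup F] [NormedSpace ℝ F]

lemma ode_zero_right (f f' : ℝ → F) (hd : ∀ t, HasDerivAt f (f' t) t)
    (a b : ℝ) (hab : a ≤ b) (K : ℝ)
    (hK : ∀ t ∈ Set.Icc a b, ‖f' t‖ ≤ K * ‖f t‖)
    (h0 : f a = 0) : f b = 0 := by
  have H := norm_le_gronwallBound_of_norm_deriv_right_le (f := f) (f' := f')
    (δ := 0) (K := K) (ε := 0) (a := a) (b := b)
    (fun t _ => (hd t).continuousAt.continuousWithinAt)
    (fun t _ => (hd t).hasDerivWithinAt)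
    (by simp [h0])
    (fun t ht => by simpa using hK t (Set.mem_Icc_of_Ico ht))
  have hb := H b (Set.right_mem_Icc.2 hab)
  rw [gronwallBound_ε0_δ0] at hb
  exact norm_le_zero_iff.1 hb

lemma ode_zero (f f' : ℝ → F) (hd : ∀ t, HasDerivAt f (f' t) t)
    (a b : ℝ) (K : ℝ)
    (hK : ∀ t ∈ Set.uIcc a b, ‖f' t‖ ≤ K * ‖f t‖)
    (h0 : f a = 0) : f b = 0 := by
  rcases le_total a b with hab | hab
  · exact ode_zero_right f f' hd a b hab K
      (fun t ht => hK t (by rwa [Set.uIcc_of_le hab])) h0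
  · have hd' : ∀ t, HasDerivAt (fun s => f (-s)) ((-1 : ℝ) • f' (-t)) t := by
      intro t
      exact (hd (-t)).scomp t (hasDerivAt_neg t)
    have := ode_zero_right (fun s => f (-s)) (fun s => (-1 : ℝ) • f' (-s)) hd'
      (-a) (-b) (by linarith) K
      (fun t ht => by
        have : -t ∈ Set.uIcc a b := by
          rw [Set.uIcc_of_ge hab]
          constructor <;> [linarith [ht.2]; linarith [ht.1]]
        simpa using hK (-t) this)
      (by simpa using h0)
    simpa using this

end gronwallHelpers

open RealInnerProductSpace in
lemma key_perturb {E : Type*} [NormedAddCommGroup E] [InnerProductSpace ℝ E]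
    [FiniteDimensional ℝ E] (X U : E →L[ℝ] E)
    (hsym : ∀ v w : E, ⟪X v, U w⟫ = ⟪U v, X w⟫)
    (hker : ∀ v : E, X v = 0 → U v = 0 → v = 0) :
    ∃ ε > (0:ℝ), ∃ δ > (0:ℝ), ∀ (h : ℝ) (v e : E), h ≠ 0 → |h| < δ → ‖v‖ = 1 →
      X v + h • U v + e = 0 → ‖e‖ ≤ ε * |h| → False := by
  classical
  -- antilipschitz constant for v ↦ (X v, U v)
  obtain ⟨Km, hKm0, hKm⟩ := ((X.prod U).toLinearMap).exists_antilipschitzWith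
    (by
      rw [LinearMap.ker_eq_bot']
      intro v hv
      have h1 : X v = 0 ∧ U v = 0 := by
        have : (X v, U v) = (0, 0) := hv
        exact ⟨congrArg Prod.fst this, congrArg Prod.snd this⟩
      exact hker v h1.1 h1.2)
  set m : ℝ := (Km : ℝ)⁻¹ with hm_def
  have hm0 : 0 < m := by positivity
  have hmle : ∀ v : E, m * ‖v‖ ≤ ‖X v‖ + ‖U v‖ := by
    intro v
    have h1 : ‖v‖ ≤ Km * ‖(X v, U v)‖ := by
      have := hKm.le_mul_dist v 0
      simpa [dist_eq_norm] using this
    have h2 : ‖(X v, U v)‖ ≤ ‖X v‖ + ‖U v‖ := by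
      rw [Prod.norm_def]
      exact max_le (le_add_of_nonneg_right (norm_nonneg _))
        (le_add_of_nonneg_left (norm_nonneg _))
    have hKmpos : (0:ℝ) < Km := by exact_mod_cast hKm0
    rw [hm_def, inv_mul_le_iff₀ hKmpos]
    calc ‖v‖ ≤ Km * ‖(X v, U v)‖ := h1
      _ ≤ Km * (‖X v‖ + ‖U v‖) := by
          exact mul_le_mul_of_nonneg_left h2 (le_of_lt hKmpos)
  -- antilipschitz constant for X restricted to (ker X)ᗮ
  set Ker : Submodule ℝ E := LinearMap.ker (X : E →ₗ[ℝ] E) with hKer_def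
  obtain ⟨Kc, hKc0, hKc⟩ := ((X.comp (Submodule.subtypeL Kerᗮ)).toLinearMap).exists_antilipschitzWith
    (by
      rw [LinearMap.ker_eq_bot']
      intro bb hXb
      obtain ⟨b, hb⟩ := bb
      have hbKer : b ∈ Ker := by
        simpa [hKer_def] using hXb
      have hbb : ⟪b, b⟫ = (0:ℝ) := hb b hbKer
      have : b = 0 := inner_self_eq_zero.1 hbb
      exact Subtype.ext this)
  have hKcle : ∀ b : E, b ∈ Kerᗮ → ‖b‖ ≤ Kc * ‖X b‖ := by
    intro b hb
    have := hKc.le_mul_dist (⟨b, hb⟩ : Kerᗮ) 0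
    simpa [dist_eq_norm] using this
  set CU : ℝ := ‖U‖ with hCU_def
  have hCU0 : 0 ≤ CU := norm_nonneg _
  have hKc0' : (0:ℝ) < Kc := by exact_mod_cast hKc0
  set ε : ℝ := m / 4 with hε_def
  have hε0 : 0 < ε := by positivity
  set D : ℝ := (CU + ε) * (1 + 2 * CU * Kc) + 1 with hD_def
  have hD0 : 0 < D := by positivity
  set δ : ℝ := m / (4 * D) with hδ_def
  have hδ0 : 0 < δ := by positivity
  refine ⟨ε, hε0, δ, hδ0, ?_⟩
  intro h v e hne hδh hv1 heq hee
  have hh0 : 0 < |h| := abs_pos.2 hne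
  -- decomposition
  set a : E := (Ker.orthogonalProjectionOnto v : E) with ha_def
  set b : E := v - a with hb_def
  have hbmem : b ∈ Kerᗮ := Submodule.sub_starProjection_mem_orthogonal (K := Ker) v
  have hamem : a ∈ Ker := (Ker.orthogonalProjectionOnto v).2
  have hXa : X a = 0 := hamem
  have hvab : v = a + b := by rw [hb_def]; abel
  have hana : ‖a‖ ≤ 1 := by
    have := Submodule.orthogonalProjectionOnto_norm_le Ker
    calc ‖a‖ ≤ ‖(Ker.orthogonalProjectionOnto)‖ * ‖v‖ := (Ker.orthogonalProjectionOnto).le_opNorm v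
      _ ≤ 1 * 1 := by
          apply mul_le_mul this (le_of_eq hv1) (norm_nonneg _) zero_le_one
      _ = 1 := one_mul 1
  -- bound on X v and b
  have hXvXb : X v = X b := by
    rw [hvab, map_add, hXa, zero_add]
  have hUvle : ‖U v‖ ≤ CU := by
    calc ‖U v‖ ≤ ‖U‖ * ‖v‖ := U.le_opNorm v
      _ = CU := by rw [hv1, hCU_def, mul_one]
  have hXv : ‖X v‖ ≤ |h| * (CU + ε) := by
    have h1 : X v = -(h • U v + e) := by
      rw [add_assoc] at heq
      exact eq_neg_of_add_eq_zero_left heq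
    calc ‖X v‖ = ‖h • U v + e‖ := by rw [h1, norm_neg]
      _ ≤ ‖h • U v‖ + ‖e‖ := norm_add_le _ _
      _ ≤ |h| * CU + ε * |h| := by
          apply add_le_add _ hee
          rw [norm_smul, Real.norm_eq_abs]
          exact mul_le_mul_of_nonneg_left hUvle (abs_nonneg h)
      _ = |h| * (CU + ε) := by ring
  have hbb : ‖b‖ ≤ Kc * (|h| * (CU + ε)) := by
    calc ‖b‖ ≤ Kc * ‖X b‖ := hKcle b hbmem
      _ = Kc * ‖X v‖ := by rw [hXvXb]
      _ ≤ Kc * (|h| * (CU + ε)) := by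
          exact mul_le_mul_of_nonneg_left hXv (le_of_lt hKc0')
  -- the inner product cancellation
  have hUaXv : ⟪U a, X v⟫ = 0 := by
    rw [← hsym a v, hXa]
    simp
  have hinner0 : ⟪U a, X v⟫ + h * ⟪U a, U v⟫ + ⟪U a, e⟫ = 0 := by
    have : ⟪U a, X v + h • U v + e⟫ = (0:ℝ) := by rw [heq]; simp
    rwa [inner_add_right, inner_add_right, real_inner_smul_right] at this
  have hkey : h * ⟪U a, U v⟫ = -⟪U a, e⟫ := by
    rw [hUaXv] at hinner0; linarith
  have hUaUv : ⟪U a, U v⟫ = ‖U a‖ ^ 2 + ⟪U a, U b⟫ := by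
    rw [hvab, map_add, inner_add_right, ← real_inner_self_eq_norm_sq]
  have hUble : ‖U b‖ ≤ CU * ‖b‖ := U.le_opNorm b
  have hUale : ‖U a‖ ≤ ε + CU * ‖b‖ := by
    have h2 : |h| * ‖U a‖ ^ 2 ≤ ‖U a‖ * (ε * |h|) + |h| * (‖U a‖ * (CU * ‖b‖)) := by
      have e1 : |h| * ‖U a‖ ^ 2 = |h * ⟪U a, U v⟫ - h * ⟪U a, U b⟫| := by
        rw [← mul_sub, hUaUv, abs_mul, add_sub_cancel_right]
        congr 1
        exact (abs_of_nonneg (by positivity)).symm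
      have e2 : |h * ⟪U a, U v⟫ - h * ⟪U a, U b⟫| ≤ |⟪U a, e⟫| + |h| * |⟪U a, U b⟫| := by
        rw [hkey]
        calc |-⟪U a, e⟫ - h * ⟪U a, U b⟫| ≤ |-⟪U a, e⟫| + |h * ⟪U a, U b⟫| := abs_sub _ _
          _ = |⟪U a, e⟫| + |h| * |⟪U a, U b⟫| := by rw [abs_neg, abs_mul]
      have e3 : |⟪U a, e⟫| ≤ ‖U a‖ * (ε * |h|) := by
        calc |⟪U a, e⟫| ≤ ‖U a‖ * ‖e‖ := abs_real_inner_le_norm _ _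
          _ ≤ ‖U a‖ * (ε * |h|) := mul_le_mul_of_nonneg_left hee (norm_nonneg _)
      have e4 : |⟪U a, U b⟫| ≤ ‖U a‖ * (CU * ‖b‖) := by
        calc |⟪U a, U b⟫| ≤ ‖U a‖ * ‖U b‖ := abs_real_inner_le_norm _ _
          _ ≤ ‖U a‖ * (CU * ‖b‖) := mul_le_mul_of_nonneg_left hUble (norm_nonneg _)
      calc |h| * ‖U a‖ ^ 2 ≤ |⟪U a, e⟫| + |h| * |⟪U a, U b⟫| := by rw [e1]; exact e2
        _ ≤ ‖U a‖ * (ε * |h|) + |h| * (‖U a‖ * (CU * ‖b‖)) := by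
            apply add_le_add e3
            exact mul_le_mul_of_nonneg_left e4 (abs_nonneg h)
    -- divide by |h|
    have h3 : ‖U a‖ ^ 2 ≤ ‖U a‖ * (ε + CU * ‖b‖) := by
      have h7 : |h| * ‖U a‖ ^ 2 ≤ |h| * (‖U a‖ * (ε + CU * ‖b‖)) := by
        calc |h| * ‖U a‖ ^ 2 ≤ ‖U a‖ * (ε * |h|) + |h| * (‖U a‖ * (CU * ‖b‖)) := h2
          _ = |h| * (‖U a‖ * (ε + CU * ‖b‖)) := by ring
      exact le_of_mul_le_mul_left h7 hh0
    rcases eq_or_lt_of_le (norm_nonneg (U a)) with h4 | h4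
    · rw [← h4]; positivity
    · rw [pow_two] at h3
      exact le_of_mul_le_mul_left h3 h4
  have hUv2 : ‖U v‖ ≤ ε + 2 * CU * ‖b‖ := by
    calc ‖U v‖ = ‖U a + U b‖ := by rw [hvab, map_add]
      _ ≤ ‖U a‖ + ‖U b‖ := norm_add_le _ _
      _ ≤ (ε + CU * ‖b‖) + CU * ‖b‖ := add_le_add hUale hUble
      _ = ε + 2 * CU * ‖b‖ := by ring
  -- contradiction
  have hfinal : m ≤ |h| * (CU + ε) * (1 + 2 * CU * Kc) + ε := by
    have h5 := hmle v
    rw [hv1, mul_one] at h5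
    have h6 : ‖U v‖ ≤ ε + 2 * CU * (Kc * (|h| * (CU + ε))) := by
      calc ‖U v‖ ≤ ε + 2 * CU * ‖b‖ := hUv2
        _ ≤ ε + 2 * CU * (Kc * (|h| * (CU + ε))) := by
            apply add_le_add_right
            apply mul_le_mul_of_nonneg_left hbb
            positivity
    calc m ≤ ‖X v‖ + ‖U v‖ := h5
      _ ≤ |h| * (CU + ε) + (ε + 2 * CU * (Kc * (|h| * (CU + ε)))) := add_le_add hXv h6
      _ = |h| * (CU + ε) * (1 + 2 * CU * Kc) + ε := by ring
  have hDd : |h| * (CU + ε) * (1 + 2 * CU * Kc) ≤ |h| * D := by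
    rw [hD_def]
    have : (CU + ε) * (1 + 2 * CU * Kc) ≤ (CU + ε) * (1 + 2 * CU * Kc) + 1 := by linarith
    calc |h| * (CU + ε) * (1 + 2 * CU * Kc) = |h| * ((CU + ε) * (1 + 2 * CU * Kc)) := by ring
      _ ≤ |h| * ((CU + ε) * (1 + 2 * CU * Kc) + 1) := by
          exact mul_le_mul_of_nonneg_left this (abs_nonneg h)
  have hhD : |h| * D < δ * D := by
    exact mul_lt_mul_of_pos_right hδh hD0
  have hδD : δ * D = m / 4 := by
    rw [hδ_def]; field_simp
  have h9 : m ≤ |h| * D + ε := le_trans hfinal (add_le_add_left hDd ε)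
  have h10 : |h| * D < m / 4 := hδD ▸ hhD
  have h11 : ε = m / 4 := hε_def
  linarith [h9, h10, h11, hm0]

lemma dot_aux {n : ℕ} (A B : Matrix (Fin n) (Fin n) ℝ) (v w : Fin n → ℝ) :
    (A *ᵥ v) ⬝ᵥ (B *ᵥ w) = v ⬝ᵥ ((Aᵀ * B) *ᵥ w) := by
  rw [Matrix.dotProduct_mulVec (A *ᵥ v) B w, Matrix.dotProduct_mulVec v (Aᵀ * B) w,
    ← Matrix.vecMul_vecMul, Matrix.vecMul_transpose]

/-- Let `L` be a twice differentiable global solution of the Jacobi equation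
`L'' + p L = 0` (with `p` continuous and symmetric), such that at some `u₀` the matrix
`L u₀` is invertible and `L' u₀ * (L u₀)⁻¹` is symmetric.  Then the degeneracy set
`𝕊 = {u | det (L u) = 0}` has no accumulation point in `ℝ`. -/
theorem degeneracy_set_discrete {n : ℕ}
    (p L L' L'' : ℝ → Matrix (Fin n) (Fin n) ℝ)
    (hp : Continuous p)
    (hpsym : ∀ u, (p u)ᵀ = p u)
    (hL : ∀ u, HasDerivAt L (L' u) u)
    (hL' : ∀ u, HasDerivAt L' (L'' u) u)
    (hJacobi : ∀ u, L'' u + p u * L u = 0)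
    (u₀ : ℝ) (hu₀ : IsUnit (L u₀))
    (hsym : (L' u₀ * (L u₀)⁻¹)ᵀ = L' u₀ * (L u₀)⁻¹) :
    ∀ x : ℝ, ¬ AccPt x (Filter.principal {u : ℝ | (L u).det = 0}) := by
  classical
  have hdet : IsUnit (L u₀).det := (Matrix.isUnit_iff_isUnit_det _).1 hu₀
  have hinv : (L u₀)⁻¹ * L u₀ = 1 := Matrix.nonsing_inv_mul _ hdet
  have hJ : ∀ u, L'' u = -(p u * L u) := fun u => eq_neg_of_add_eq_zero_left (hJacobi u)
  -- Step A : (L' u)ᵀ * L u is symmetric for all u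
  have hW : ∀ u, (L' u)ᵀ * L u = (L u)ᵀ * L' u := by
    let tC : Matrix (Fin n) (Fin n) ℝ →L[ℝ] Matrix (Fin n) (Fin n) ℝ :=
      LinearMap.toContinuousLinearMap
        (Matrix.transposeLinearEquiv (Fin n) (Fin n) ℝ ℝ).toLinearMap
    have htCapp : ∀ A : Matrix (Fin n) (Fin n) ℝ, tC A = Aᵀ := fun A => rfl
    have hT : ∀ u, HasDerivAt (fun s => (L s)ᵀ) ((L' u)ᵀ) u := by
      intro u
      have := tC.hasFDerivAt.comp_hasDerivAt u (hL u)
      exact this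
    have hT' : ∀ u, HasDerivAt (fun s => (L' s)ᵀ) ((L'' u)ᵀ) u := by
      intro u
      have := tC.hasFDerivAt.comp_hasDerivAt u (hL' u)
      exact this
    set W : ℝ → Matrix (Fin n) (Fin n) ℝ :=
      fun u => (L u)ᵀ * L' u - (L' u)ᵀ * L u with hWdef
    have hWd : ∀ u, HasDerivAt W 0 u := by
      intro u
      have h1 := ((hT u).mul (hL' u)).sub ((hT' u).mul (hL u))
      have h2 : (L' u)ᵀ * L' u + (L u)ᵀ * L'' u - ((L'' u)ᵀ * L u + (L' u)ᵀ * L' u) = 0 := by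
        rw [hJ u, Matrix.transpose_neg, Matrix.transpose_mul, hpsym]
        noncomm_ring
      rw [h2] at h1
      exact h1
    have hWc : ∀ u, W u = W u₀ :=
      fun u => is_const_of_deriv_eq_zero (fun s => (hWd s).differentiableAt)
        (fun s => (hWd s).deriv) u u₀
    have h3 : ((L u₀)⁻¹)ᵀ * (L' u₀)ᵀ = L' u₀ * (L u₀)⁻¹ := by
      rw [← Matrix.transpose_mul]; exact hsym
    have h4 : (L' u₀)ᵀ * L u₀ = (L u₀)ᵀ * L' u₀ := by
      calc (L' u₀)ᵀ * L u₀
          = ((L u₀)ᵀ * ((L u₀)⁻¹)ᵀ) * ((L' u₀)ᵀ * L u₀) := by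
            rw [← Matrix.transpose_mul, hinv, Matrix.transpose_one, one_mul]
        _ = (L u₀)ᵀ * ((((L u₀)⁻¹)ᵀ * (L' u₀)ᵀ) * L u₀) := by
            simp only [Matrix.mul_assoc]
        _ = (L u₀)ᵀ * ((L' u₀ * (L u₀)⁻¹) * L u₀) := by rw [h3]
        _ = (L u₀)ᵀ * L' u₀ * ((L u₀)⁻¹ * L u₀) := by simp only [Matrix.mul_assoc]
        _ = (L u₀)ᵀ * L' u₀ := by rw [hinv, Matrix.mul_one]
    have hW0 : W u₀ = 0 := by rw [hWdef]; dsimp only; rw [← h4, sub_self]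
    intro u
    have h5 := hWc u
    rw [hW0] at h5
    have h6 : W u = 0 := h5
    have h7 : (L u)ᵀ * L' u - (L' u)ᵀ * L u = 0 := h6
    rw [sub_eq_zero] at h7
    exact h7.symm
  -- Step B : kernel condition
  have hkerLL : ∀ (a : ℝ) (v : Fin n → ℝ), L a *ᵥ v = 0 → L' a *ᵥ v = 0 → v = 0 := by
    intro a v hv hv'
    let μ : Matrix (Fin n) (Fin n) ℝ →L[ℝ] (Fin n → ℝ) :=
      LinearMap.toContinuousLinearMap
        { toFun := fun A => A *ᵥ v
          map_add' := fun A B => Matrix.add_mulVec A B v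
          map_smul' := fun c A => by simp [Matrix.smul_mulVec] }
    have hμapp : ∀ A, μ A = A *ᵥ v := fun A => rfl
    let η : Matrix (Fin n) (Fin n) ℝ →ₗ[ℝ] ((Fin n → ℝ) →L[ℝ] (Fin n → ℝ)) :=
      { toFun := fun A => LinearMap.toContinuousLinearMap (Matrix.mulVecLin A)
        map_add' := fun A B => by
          ext w
          simp [Matrix.add_mulVec]
        map_smul' := fun c A => by
          ext w
          simp [Matrix.smul_mulVec] }
    have hηapp : ∀ A w, η A w = A *ᵥ w := fun A w => rfl
    letI tF : TopologicalSpace (Matrix (Fin n) (Fin n) ℝ) :=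
      Matrix.frobeniusNormedAddCommGroup.toUniformSpace.toTopologicalSpace
    let ηC : Matrix (Fin n) (Fin n) ℝ →L[ℝ] ((Fin n → ℝ) →L[ℝ] (Fin n → ℝ)) :=
      LinearMap.toContinuousLinearMap η
    have hηCapp : ∀ A, ηC A = η A := fun A => rfl
    obtain ⟨Cη, hCη0, hbound⟩ : ∃ c : ℝ, 0 ≤ c ∧ ∀ (A : Matrix (Fin n) (Fin n) ℝ)
        (w : Fin n → ℝ), ‖A *ᵥ w‖ ≤ c * ‖A‖ * ‖w‖ := by
      refine ⟨‖ηC‖, norm_nonneg ηC, fun A w => ?_⟩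
      calc ‖A *ᵥ w‖ = ‖η A w‖ := by rw [hηapp]
        _ ≤ ‖η A‖ * ‖w‖ := (η A).le_opNorm w
        _ = ‖ηC A‖ * ‖w‖ := by rw [hηCapp]
        _ ≤ (‖ηC‖ * ‖A‖) * ‖w‖ := by
            exact mul_le_mul_of_nonneg_right (ηC.le_opNorm A) (norm_nonneg w)
    obtain ⟨C, hC⟩ := (isCompact_uIcc (a := a) (b := u₀)).exists_bound_of_continuousOn
      hp.continuousOn
    set K : ℝ := max (Cη * C) 1 with hK
    have hK1 : (1:ℝ) ≤ K := le_max_right _ _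
    set f : ℝ → (Fin n → ℝ) × (Fin n → ℝ) := fun t => (L t *ᵥ v, L' t *ᵥ v) with hf
    have hfd : ∀ t, HasDerivAt f (L' t *ᵥ v, L'' t *ᵥ v) t := by
      intro t
      apply HasDerivAt.prodMk
      · have := μ.hasFDerivAt.comp_hasDerivAt t (hL t)
        exact this
      · have := μ.hasFDerivAt.comp_hasDerivAt t (hL' t)
        exact this
    have hfst : ∀ t, ‖L t *ᵥ v‖ ≤ ‖f t‖ := by
      intro t
      rw [hf, Prod.norm_def]
      exact le_max_left _ _
    have hsnd : ∀ t, ‖L' t *ᵥ v‖ ≤ ‖f t‖ := by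
      intro t
      rw [hf, Prod.norm_def]
      exact le_max_right _ _
    have hf0 : (0:ℝ) ≤ ‖f a‖ := norm_nonneg _
    have hbnd : ∀ t ∈ Set.uIcc a u₀, ‖(L' t *ᵥ v, L'' t *ᵥ v)‖ ≤ K * ‖f t‖ := by
      intro t ht
      have h8 : ‖L'' t *ᵥ v‖ ≤ K * ‖f t‖ := by
        have h9 : L'' t *ᵥ v = -(p t *ᵥ (L t *ᵥ v)) := by
          rw [hJ t, Matrix.neg_mulVec, Matrix.mulVec_mulVec]
        rw [h9, norm_neg]
        have hCnn : 0 ≤ Cη * C := mul_nonneg hCη0 ((norm_nonneg (p t)).trans (hC t ht))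
        calc ‖p t *ᵥ (L t *ᵥ v)‖ ≤ Cη * ‖p t‖ * ‖L t *ᵥ v‖ := hbound _ _
          _ ≤ (Cη * C) * ‖f t‖ := by
              apply mul_le_mul
              · exact mul_le_mul_of_nonneg_left (hC t ht) hCη0
              · exact hfst t
              · exact norm_nonneg _
              · exact hCnn
          _ ≤ K * ‖f t‖ := by
              exact mul_le_mul_of_nonneg_right (le_max_left _ _) (norm_nonneg _)
      have h10 : ‖L' t *ᵥ v‖ ≤ K * ‖f t‖ := by
        calc ‖L' t *ᵥ v‖ ≤ ‖f t‖ := hsnd t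
          _ = 1 * ‖f t‖ := (one_mul _).symm
          _ ≤ K * ‖f t‖ := mul_le_mul_of_nonneg_right hK1 (norm_nonneg _)
      rw [Prod.norm_def]
      exact max_le h10 h8
    have hfa : f a = 0 := by
      rw [hf]
      simp only [hv, hv']
      rfl
    have hfu₀ : f u₀ = 0 := ode_zero f _ hfd a u₀ K hbnd hfa
    have h5 : L u₀ *ᵥ v = 0 := congrArg Prod.fst hfu₀
    calc v = 1 *ᵥ v := (Matrix.one_mulVec v).symm
      _ = ((L u₀)⁻¹ * L u₀) *ᵥ v := by rw [hinv]
      _ = (L u₀)⁻¹ *ᵥ (L u₀ *ᵥ v) := by rw [← Matrix.mulVec_mulVec]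
      _ = 0 := by rw [h5, Matrix.mulVec_zero]
  -- main argument
  intro x hx
  let τ : Matrix (Fin n) (Fin n) ℝ →ₗ[ℝ]
      (EuclideanSpace ℝ (Fin n) →L[ℝ] EuclideanSpace ℝ (Fin n)) :=
    { toFun := fun A => LinearMap.toContinuousLinearMap (Matrix.toEuclideanLin A)
      map_add' := fun A B => by ext w; simp
      map_smul' := fun c A => by ext w; simp }
  have hτapp : ∀ (A : Matrix (Fin n) (Fin n) ℝ) (w : EuclideanSpace ℝ (Fin n)),
      WithLp.equiv 2 (Fin n → ℝ) (τ A w) = A *ᵥ (WithLp.equiv 2 (Fin n → ℝ) w) :=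
    fun A w => rfl
  let X : EuclideanSpace ℝ (Fin n) →L[ℝ] EuclideanSpace ℝ (Fin n) := τ (L x)
  let U : EuclideanSpace ℝ (Fin n) →L[ℝ] EuclideanSpace ℝ (Fin n) := τ (L' x)
  have hdotτ : ∀ (A B : Matrix (Fin n) (Fin n) ℝ) (v w : EuclideanSpace ℝ (Fin n)),
      (inner ℝ (τ A v) (τ B w) : ℝ) =
        (WithLp.equiv 2 (Fin n → ℝ) v) ⬝ᵥ
          ((Aᵀ * B) *ᵥ (WithLp.equiv 2 (Fin n → ℝ) w)) := by
    intro A B v w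
    rw [← dot_aux]
    simp only [PiLp.inner_apply, RCLike.inner_apply, conj_trivial]
    apply Finset.sum_congr rfl
    intro i _
    rw [mul_comm]; rfl
  have hsymXU : ∀ v w : EuclideanSpace ℝ (Fin n),
      (inner ℝ (X v) (U w) : ℝ) = (inner ℝ (U v) (X w) : ℝ) := by
    intro v w
    rw [hdotτ, hdotτ, hW x]
  have hkerXU : ∀ v : EuclideanSpace ℝ (Fin n), X v = 0 → U v = 0 → v = 0 := by
    intro v hv hv'
    have h1 : L x *ᵥ (WithLp.equiv 2 (Fin n → ℝ) v) = 0 := by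
      rw [← hτapp]
      rw [show τ (L x) v = X v from rfl, hv]
      rfl
    have h2 : L' x *ᵥ (WithLp.equiv 2 (Fin n → ℝ) v) = 0 := by
      rw [← hτapp]
      rw [show τ (L' x) v = U v from rfl, hv']
      rfl
    have h3 := hkerLL x _ h1 h2
    exact (WithLp.equiv 2 (Fin n → ℝ)).injective (by simpa using h3)
  obtain ⟨ε, hε0, δ, hδ0, hKey⟩ := key_perturb X U hsymXU hkerXU
  -- little-o bound from differentiability
  let τC := LinearMap.toContinuousLinearMap τ
  have hτCapp : ∀ A, τC A = τ A := fun A => rfl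
  have hgd : HasDerivAt (fun u => τ (L u)) (τ (L' x)) x := by
    have := τC.hasFDerivAt.comp_hasDerivAt x (hL x)
    exact this
  have hlo := (hasDerivAt_iff_isLittleO.1 hgd).def hε0
  rw [Metric.eventually_nhds_iff] at hlo
  obtain ⟨δ₂, hδ₂0, hδ₂⟩ := hlo
  -- conclude
  rw [accPt_iff_nhds] at hx
  obtain ⟨y, ⟨hyball, hyS⟩, hyne⟩ := hx (Metric.ball x (min δ δ₂))
    (Metric.ball_mem_nhds x (by positivity))
  rw [Metric.mem_ball, Real.dist_eq] at hyball
  have hydet : (L y).det = 0 := hyS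
  obtain ⟨w, hw0, hww⟩ := (Matrix.exists_mulVec_eq_zero_iff).2 hydet
  set wE : EuclideanSpace ℝ (Fin n) := (WithLp.equiv 2 (Fin n → ℝ)).symm w with hwE
  have hwE0 : wE ≠ 0 := by
    simp only [hwE, ne_eq, EmbeddingLike.map_eq_zero_iff]
    exact fun h => hw0 ((WithLp.equiv 2 (Fin n → ℝ)).symm.injective (by rw [h]; rfl))
  set v : EuclideanSpace ℝ (Fin n) := ‖wE‖⁻¹ • wE with hv
  have hv1 : ‖v‖ = 1 := norm_smul_inv_norm hwE0
  have hne : y - x ≠ 0 := sub_ne_zero.2 hyne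
  have hgyv : τ (L y) v = 0 := by
    apply (WithLp.equiv 2 (Fin n → ℝ)).injective
    rw [hτapp]
    have hveq : WithLp.equiv 2 (Fin n → ℝ) v = ‖wE‖⁻¹ • w := by
      rw [hv]
      simp [hwE]
    rw [hveq, Matrix.mulVec_smul, hww]
    simp
  set e : EuclideanSpace ℝ (Fin n) := τ (L y) v - X v - (y - x) • U v with he
  have heq : X v + (y - x) • U v + e = 0 := by
    rw [he, hgyv]
    abel
  have hdisty : dist y x < δ₂ := by
    rw [Real.dist_eq]
    exact lt_of_lt_of_le hyball (min_le_right _ _)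
  have h2 := hδ₂ hdisty
  have hee : ‖e‖ ≤ ε * |y - x| := by
    have h1 : e = (τ (L y) - τ (L x) - (y - x) • τ (L' x)) v := by
      rw [he]
      simp only [ContinuousLinearMap.sub_apply, ContinuousLinearMap.smul_apply]
      rfl
    calc ‖e‖ = ‖(τ (L y) - τ (L x) - (y - x) • τ (L' x)) v‖ := by rw [h1]
      _ ≤ ‖τ (L y) - τ (L x) - (y - x) • τ (L' x)‖ * ‖v‖ :=
          ContinuousLinearMap.le_opNorm _ _
      _ = ‖τ (L y) - τ (L x) - (y - x) • τ (L' x)‖ := by rw [hv1, mul_one]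
      _ ≤ ε * ‖y - x‖ := h2
      _ = ε * |y - x| := by rw [Real.norm_eq_abs]
  exact hKey (y - x) v e hne (lt_of_lt_of_le hyball (min_le_left _ _)) hv1 heq hee
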